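/- Let L be a Lie algebra over a field F of characteristic 0, T ∈ L, and let Δ₀ be the standard coproduct on the universal enveloping algebra U(L) (so Δ₀(T) = T⊗1 + 1⊗T). Then for every a ∈ F and nonnegative integer m, Δ₀(T^[m]) = Σ_{i=0}^{m} C(m,i) T_{−a}^[i] ⊗ T_a^[m−i], where T_a^[k] = (T+a)(T+a−1)···(T+a−k+1) and T^[m] = T_0^[m]. -/
import Mathlib


open scoped TensorProduct
open UniversalEnvelopingAlgebra

/-- Falling factorial `T_a^[k] = (T+a)(T+a−1)⋯(T+a−k+1)` in an `F`-algebra. -/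
noncomputable def fall {F A : Type*} [Field F] [Ring A] [Algebra F A]
    (x : A) (a : F) : ℕ → A
  | 0 => 1
  | n + 1 => fall x a n * (x + algebraMap F A (a - n))

lemma pascal_sum {M : Type*} [AddCommMonoid M] (S : ℕ → M) (m : ℕ) :
    ∑ i ∈ Finset.range (m + 1), (m.choose i) • S (i + 1)
      + ∑ i ∈ Finset.range (m + 1), (m.choose i) • S i
    = ∑ j ∈ Finset.range (m + 2), ((m + 1).choose j) • S j := by
  rw [Finset.sum_range_succ' (fun j => ((m + 1).choose j) • S j) (m + 1)]
  rw [Finset.sum_range_succ' (fun i => (m.choose i) • S i) m]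
  simp only [Nat.choose_succ_succ, Nat.choose_zero_right, add_smul, Finset.sum_add_distrib]
  rw [Finset.sum_range_succ (fun i => (m.choose (i + 1)) • S (i + 1)) m]
  simp [Nat.choose_succ_self]
  abel

theorem coprod_fall {F L : Type*} [Field F] [CharZero F] [LieRing L] [LieAlgebra F L]
    (T : L)
    (Δ₀ : UniversalEnvelopingAlgebra F L →ₐ[F]
      (UniversalEnvelopingAlgebra F L ⊗[F] UniversalEnvelopingAlgebra F L))
    (hΔ : ∀ x : L, Δ₀ (ι F x) = ι F x ⊗ₜ[F] 1 + 1 ⊗ₜ[F] ι F x)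
    (a : F) (m : ℕ) :
    Δ₀ (fall (ι F T) (0 : F) m)
      = ∑ i ∈ Finset.range (m + 1),
          (m.choose i) • (fall (ι F T) (-a) i ⊗ₜ[F] fall (ι F T) a (m - i)) := by
  set A := UniversalEnvelopingAlgebra F L with hA
  set u := ι F T with hu
  induction m with
  | zero => simp [fall, Algebra.TensorProduct.one_def]
  | succ m ih =>
    have key : ∀ i ∈ Finset.range (m + 1),
        (fall u (-a) i ⊗ₜ[F] fall u a (m - i)) *
          (u ⊗ₜ[F] (1 : A) + (1 : A) ⊗ₜ[F] u + algebraMap F (A ⊗[F] A) ((0 : F) - m))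
        = fall u (-a) (i + 1) ⊗ₜ[F] fall u a (m - i)
          + fall u (-a) i ⊗ₜ[F] fall u a (m - i + 1) := by
      intro i hi
      have hi' : i ≤ m := Nat.lt_succ_iff.mp (Finset.mem_range.mp hi)
      have hcast : ((m - i : ℕ) : F) = (m : F) - i := by
        rw [Nat.cast_sub hi']
      have hdecomp : u ⊗ₜ[F] (1 : A) + (1 : A) ⊗ₜ[F] u
            + algebraMap F (A ⊗[F] A) ((0 : F) - m)
          = (u + algebraMap F A ((-a) - i)) ⊗ₜ[F] (1 : A)
            + (1 : A) ⊗ₜ[F] (u + algebraMap F A (a - ((m - i : ℕ) : F))) := by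
        rw [TensorProduct.add_tmul, TensorProduct.tmul_add]
        have h1 : (algebraMap F A ((-a) - i)) ⊗ₜ[F] (1 : A)
            = algebraMap F (A ⊗[F] A) ((-a) - i) := by
          rw [Algebra.TensorProduct.algebraMap_apply]
        have h2 : (1 : A) ⊗ₜ[F] (algebraMap F A (a - ((m - i : ℕ) : F)))
            = algebraMap F (A ⊗[F] A) (a - ((m - i : ℕ) : F)) := by
          rw [Algebra.TensorProduct.algebraMap_apply']
        rw [h1, h2]
        have : ((0 : F) - m) = ((-a) - i) + (a - ((m - i : ℕ) : F)) := by
          rw [hcast]; ring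
        rw [this, map_add]
        abel
      rw [hdecomp, mul_add, Algebra.TensorProduct.tmul_mul_tmul,
        Algebra.TensorProduct.tmul_mul_tmul]
      simp only [mul_one]
      rfl
    have step : Δ₀ (fall u (0 : F) (m + 1))
        = Δ₀ (fall u (0 : F) m)
          * (u ⊗ₜ[F] (1 : A) + (1 : A) ⊗ₜ[F] u + algebraMap F (A ⊗[F] A) ((0 : F) - m)) := by
      have : fall u (0 : F) (m + 1) = fall u (0 : F) m * (u + algebraMap F A ((0 : F) - m)) :=
        rfl
      rw [this, map_mul, map_add, hΔ, AlgHom.commutes]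
    rw [step, ih, Finset.sum_mul]
    rw [Finset.sum_congr rfl (fun i hi => by
      rw [smul_mul_assoc, key i hi, smul_add])]
    rw [Finset.sum_add_distrib]
    have e1 : ∑ i ∈ Finset.range (m + 1),
          (m.choose i) • (fall u (-a) (i + 1) ⊗ₜ[F] fall u a (m - i))
        = ∑ i ∈ Finset.range (m + 1),
          (m.choose i) • (fall u (-a) (i + 1) ⊗ₜ[F] fall u a ((m + 1) - (i + 1))) := by
      apply Finset.sum_congr rfl
      intro i hi
      rw [show (m + 1) - (i + 1) = m - i from by omega]
    have e2 : ∑ i ∈ Finset.range (m + 1),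
          (m.choose i) • (fall u (-a) i ⊗ₜ[F] fall u a (m - i + 1))
        = ∑ i ∈ Finset.range (m + 1),
          (m.choose i) • (fall u (-a) i ⊗ₜ[F] fall u a ((m + 1) - i)) := by
      apply Finset.sum_congr rfl
      intro i hi
      have hi' : i ≤ m := Nat.lt_succ_iff.mp (Finset.mem_range.mp hi)
      rw [show m - i + 1 = (m + 1) - i from by omega]
    rw [e1, e2]
    exact pascal_sum (fun j => fall u (-a) j ⊗ₜ[F] fall u a ((m + 1) - j)) m
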